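/- Let x, y, z be positive real numbers with xyz = 1. Then (x-1)/(x²-x+1) + (y-1)/(y²-y+1) + (z-1)/(z²-z+1) ≤ 0. -/

import Mathlib

private lemma damascus_T (s p : ℝ) (hs : 0 < s) (hp : 0 < p) (h4 : 4*p ≤ s^2) :
    0 ≤ p^2*s^2 - 3*p^2*s + 1 - 3*p + 6*p^2 - 2*p^3 := by
  nlinarith [sq_nonneg (p*s-2*p), sq_nonneg (p-1), sq_nonneg (p*s-2), sq_nonneg (s-2),
    mul_pos hp hs, sq_nonneg (p*s - p - 1),
    mul_nonneg (mul_nonneg hp.le hp.le) (sub_nonneg.2 h4), mul_nonneg hp.le (sub_nonneg.2 h4)]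

theorem damascus_inequality (x y z : ℝ) (hx : 0 < x) (hy : 0 < y) (hz : 0 < z)
    (h : x * y * z = 1) :
    (x - 1) / (x ^ 2 - x + 1) + (y - 1) / (y ^ 2 - y + 1) + (z - 1) / (z ^ 2 - z + 1) ≤ 0 := by
  have hx1 : (0:ℝ) < x ^ 2 - x + 1 := by nlinarith [sq_nonneg (2*x-1)]
  have hy1 : (0:ℝ) < y ^ 2 - y + 1 := by nlinarith [sq_nonneg (2*y-1)]
  have ht0 : 0 < x*y := mul_pos hx hy
  have ht1 : (0:ℝ) < (x*y)^2 - (x*y) + 1 := by nlinarith [sq_nonneg (2*(x*y)-1)]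
  have hT := damascus_T (x+y) (x*y) (add_pos hx hy) ht0 (by nlinarith [sq_nonneg (x-y)])
  have hP : 0 ≤ (x*y)*((x*y)-1)*(x^2-x+1)*(y^2-y+1)
      - ((x-1)*(y^2-y+1)+(y-1)*(x^2-x+1))*((x*y)^2-(x*y)+1) := by
    nlinarith [hT, sq_nonneg ((x-1)*(y-1)*(x*y-1))]
  have hkey : (x - 1) / (x ^ 2 - x + 1) + (y - 1) / (y ^ 2 - y + 1)
      ≤ (x*y)*((x*y)-1)/((x*y)^2 - (x*y) + 1) := by
    rw [div_add_div _ _ hx1.ne' hy1.ne', div_le_div_iff₀ (mul_pos hx1 hy1) ht1]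
    nlinarith [hP]
  have hzv : z = (x*y)⁻¹ := by
    field_simp
    linear_combination h
  have hzeq : (z - 1) / (z ^ 2 - z + 1) = -((x*y)*((x*y)-1)/((x*y)^2 - (x*y) + 1)) := by
    rw [hzv]
    rw [div_eq_iff (by nlinarith [sq_nonneg (2*(x*y)⁻¹ - 1)] : ((x*y)⁻¹)^2 - (x*y)⁻¹ + 1 ≠ 0)]
    field_simp
    rw [← neg_div, eq_div_iff (by nlinarith [ht1] : x * y * (x * y - 1) + 1 ≠ 0)]
    ring
  rw [hzeq]
  linarith [hkey]
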